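/- Fix λ < 1 with λ ≠ 0 and q = 1 − λ. Consider a λ-exponential family p(·;ϑ) = exp_q(ϑ·F(·))·e^{−φ_λ(ϑ)} on (𝒳, ν) whose natural parameter set Ω is nonempty open convex, with φ_λ smooth (differentiation under the integral sign valid) and satisfying 1 − λ∇φ_λ(ϑ)·ϑ > 0 on Ω, and such that the Hessian of (1/λ)(e^{λφ_λ} − 1) is strictly positive definite on Ω; assume also the support condition holds. Then: (a) for all ϑ, ϑ' ∈ Ω, the λ-logarithmic divergence of φ_λ equals the Rényi divergence of order q with arguments swapped: φ_λ(ϑ) − φ_λ(ϑ') − (1/λ)·log(1 + λ ∇φ_λ(ϑ')·(ϑ − ϑ')) = (1/(q−1))·log ∫ p(x;ϑ')^q · p(x;ϑ)^{1−q} dν(x); and (b) for η = ∇^{c_λ}φ_λ(ϑ) = ∇φ_λ(ϑ)/(1 − λ∇φ_λ(ϑ)·ϑ), the c_λ-conjugate satisfies φ_λ^{c_λ}(η) = −(1/(1−q))·log ∫ p(x;ϑ)^q dν(x), the negative Rényi entropy of order q of p(·;ϑ). -/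

import Mathlib

open MeasureTheory Real
open scoped RealInnerProductSpace ENNReal BigOperators

noncomputable section

/-- The negative logarithmic cost `-c_λ(u,v) = (1/λ)·log(1 + λ u·v)`, valued in `EReal`,
with the convention `log t = -∞` for `t ≤ 0` (so that `(1/λ)·(-∞) = -∞` for `λ > 0` and
`= +∞` for `λ < 0`). -/
def negCost {d : ℕ} (lam : ℝ) (u v : EuclideanSpace ℝ (Fin d)) : EReal :=
  if 0 < 1 + lam * ⟪u, v⟫ then (((1 / lam) * Real.log (1 + lam * ⟪u, v⟫) : ℝ) : EReal)
  else if 0 < lam then ⊥ else ⊤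

/-- The `c_λ`-conjugate `f^{c_λ}(v) = sup_{u ∈ Ω} { (1/λ)·log(1 + λ u·v) − f(u) }`. -/
def lamConj {d : ℕ} (lam : ℝ) (Ω : Set (EuclideanSpace ℝ (Fin d)))
    (f : EuclideanSpace ℝ (Fin d) → ℝ) (v : EuclideanSpace ℝ (Fin d)) : EReal :=
  ⨆ u ∈ Ω, (negCost lam u v - ((f u : ℝ) : EReal))

/-- The `λ`-gradient (deformed Legendre transform) `∇^{c_λ} f(u) = ∇f(u)/(1 − λ ∇f(u)·u)`. -/
def lamGrad {d : ℕ} (lam : ℝ) (f : EuclideanSpace ℝ (Fin d) → ℝ)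
    (u : EuclideanSpace ℝ (Fin d)) : EuclideanSpace ℝ (Fin d) :=
  (1 - lam * ⟪gradient f u, u⟫)⁻¹ • gradient f u

/-- A regular `c_λ`-convex function: `f` smooth on a nonempty open convex `Ω`, the Hessian of
`F_λ = (1/λ)(e^{λ f} − 1)` strictly positive definite on `Ω`, and `1 − λ ∇f(u)·u > 0` on `Ω`. -/
def IsRegularCConvex {d : ℕ} (lam : ℝ) (Ω : Set (EuclideanSpace ℝ (Fin d)))
    (f : EuclideanSpace ℝ (Fin d) → ℝ) : Prop :=
  Ω.Nonempty ∧ IsOpen Ω ∧ Convex ℝ Ω ∧ ContDiffOn ℝ (⊤ : ℕ∞) f Ω ∧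
    (∀ u ∈ Ω, ∀ w : EuclideanSpace ℝ (Fin d), w ≠ 0 →
      0 < ⟪fderiv ℝ (gradient fun z => (1 / lam) * (Real.exp (lam * f z) - 1)) u w, w⟫) ∧
    ∀ u ∈ Ω, 0 < 1 - lam * ⟪gradient f u, u⟫

section Helpers
variable {d : ℕ} {X : Type*} [MeasurableSpace X] {ν : MeasureTheory.Measure X}
variable {lam : ℝ} {F : X → EuclideanSpace ℝ (Fin d)}

lemma measM (hF : Measurable F) (lam : ℝ) (ϑ : EuclideanSpace ℝ (Fin d)) :
    Measurable fun x => max (1 + lam * ⟪ϑ, F x⟫) 0 :=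
  ((measurable_const.add ((measurable_const.inner hF).const_mul lam)).max measurable_const)

lemma stepB (hlam0 : lam ≠ 0) (hF : Measurable F) (ϑ : EuclideanSpace ℝ (Fin d)) (c : ℝ)
    (hZϑ : ∫⁻ x, (if 0 < 1 + lam * ⟪ϑ, F x⟫ then
        ENNReal.ofReal ((1 + lam * ⟪ϑ, F x⟫) ^ (1 / lam)) else if 0 < lam then 0 else ⊤) ∂ν
      = ENNReal.ofReal (Real.exp c)) :
    (lam < 0 → ∀ᵐ x ∂ν, 0 < 1 + lam * ⟪ϑ, F x⟫) ∧
    Integrable (fun x => (max (1 + lam * ⟪ϑ, F x⟫) 0) ^ (1 / lam)) ν ∧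
    ∫ x, (max (1 + lam * ⟪ϑ, F x⟫) 0) ^ (1 / lam) ∂ν = Real.exp c := by
  have hm := measM hF lam ϑ
  have hg : Measurable fun x => (max (1 + lam * ⟪ϑ, F x⟫) 0) ^ (1 / lam) :=
    hm.pow measurable_const
  have hnn : ∀ x, 0 ≤ (max (1 + lam * ⟪ϑ, F x⟫) 0) ^ (1 / lam) := fun x =>
    Real.rpow_nonneg (le_max_right _ _) _
  have hmeasS : MeasurableSet {x | ¬ 0 < 1 + lam * ⟪ϑ, F x⟫} :=
    (measurableSet_lt measurable_const
      (measurable_const.add ((measurable_const.inner hF).const_mul lam))).compl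
  have hae0 : lam < 0 → ∀ᵐ x ∂ν, 0 < 1 + lam * ⟪ϑ, F x⟫ := by
    intro hneg
    rw [MeasureTheory.ae_iff]
    by_contra hcon
    have h1 : (⊤ : ℝ≥0∞) ≤ ∫⁻ x, (if 0 < 1 + lam * ⟪ϑ, F x⟫ then
        ENNReal.ofReal ((1 + lam * ⟪ϑ, F x⟫) ^ (1 / lam)) else if 0 < lam then 0 else ⊤) ∂ν := by
      calc (⊤ : ℝ≥0∞) = ⊤ * ν {x | ¬ 0 < 1 + lam * ⟪ϑ, F x⟫} := (ENNReal.top_mul hcon).symm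
        _ = ∫⁻ x in {x | ¬ 0 < 1 + lam * ⟪ϑ, F x⟫}, ⊤ ∂ν := (setLIntegral_const _ _).symm
        _ = ∫⁻ x in {x | ¬ 0 < 1 + lam * ⟪ϑ, F x⟫}, (if 0 < 1 + lam * ⟪ϑ, F x⟫ then
              ENNReal.ofReal ((1 + lam * ⟪ϑ, F x⟫) ^ (1 / lam)) else if 0 < lam then 0 else ⊤) ∂ν := by
            refine (setLIntegral_congr_fun hmeasS ?_).symm
            intro x hx
            simp only [if_neg hx, if_neg (not_lt.2 hneg.le)]
        _ ≤ _ := setLIntegral_le_lintegral _ _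
    rw [hZϑ] at h1
    exact (ENNReal.ofReal_lt_top.not_ge h1).elim
  have haeeq : (fun x => (if 0 < 1 + lam * ⟪ϑ, F x⟫ then
        ENNReal.ofReal ((1 + lam * ⟪ϑ, F x⟫) ^ (1 / lam)) else if 0 < lam then 0 else ⊤))
      =ᵐ[ν] fun x => ENNReal.ofReal ((max (1 + lam * ⟪ϑ, F x⟫) 0) ^ (1 / lam)) := by
    rcases lt_or_gt_of_ne hlam0 with hneg | hpos
    · filter_upwards [hae0 hneg] with x hx
      simp only [if_pos hx, max_eq_left hx.le]
    · refine Filter.Eventually.of_forall fun x => ?_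
      by_cases hx : 0 < 1 + lam * ⟪ϑ, F x⟫
      · simp only [if_pos hx, max_eq_left hx.le]
      · simp only [if_neg hx, if_pos hpos, max_eq_right (not_lt.1 hx),
          Real.zero_rpow (one_div_ne_zero hlam0), ENNReal.ofReal_zero]
  rw [lintegral_congr_ae haeeq] at hZϑ
  have hint : Integrable (fun x => (max (1 + lam * ⟪ϑ, F x⟫) 0) ^ (1 / lam)) ν := by
    refine ⟨hg.aestronglyMeasurable, ?_⟩
    rw [hasFiniteIntegral_iff_ofReal (Filter.Eventually.of_forall hnn), hZϑ]
    exact ENNReal.ofReal_lt_top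
  refine ⟨hae0, hint, ?_⟩
  rw [integral_eq_lintegral_of_nonneg_ae (Filter.Eventually.of_forall hnn)
    hg.aestronglyMeasurable, hZϑ, ENNReal.toReal_ofReal (Real.exp_pos c).le]

lemma core (hlam0 : lam ≠ 0) (hlam1 : lam < 1) (hF : Measurable F)
    (φϑ : ℝ) (gφϑ ϑ : EuclideanSpace ℝ (Fin d))
    (hZϑ : ∫⁻ x, (if 0 < 1 + lam * ⟪ϑ, F x⟫ then
        ENNReal.ofReal ((1 + lam * ⟪ϑ, F x⟫) ^ (1 / lam)) else if 0 < lam then 0 else ⊤) ∂ν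
      = ENNReal.ofReal (Real.exp φϑ))
    (hIntϑ : Integrable (fun x => ((max (1 + lam * ⟪ϑ, F x⟫) 0) ^ (1 / lam - 1)) • F x) ν)
    (hDUIϑ : Real.exp φϑ • gφϑ
      = ∫ x, ((max (1 + lam * ⟪ϑ, F x⟫) 0) ^ (1 / lam - 1)) • F x ∂ν)
    (w : EuclideanSpace ℝ (Fin d)) :
    Integrable (fun x => (max (1 + lam * ⟪ϑ, F x⟫) 0) ^ (1 / lam - 1) * (1 + lam * ⟪w, F x⟫)) ν ∧
    ∫ x, (max (1 + lam * ⟪ϑ, F x⟫) 0) ^ (1 / lam - 1) * (1 + lam * ⟪w, F x⟫) ∂ν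
      = Real.exp φϑ * (1 + lam * ⟪gφϑ, w - ϑ⟫) := by
  have hB := stepB hlam0 hF ϑ φϑ hZϑ
  have hg2 : Integrable (fun x => (max (1 + lam * ⟪ϑ, F x⟫) 0) ^ (1 / lam - 1) * ⟪w - ϑ, F x⟫) ν := by
    have := hIntϑ.inner_const (𝕜 := ℝ) (w - ϑ)
    refine this.congr (Filter.Eventually.of_forall fun x => ?_)
    simp only [real_inner_smul_left]
    rw [real_inner_comm (F x) (w - ϑ)]
  have hptwise : ∀ x, (max (1 + lam * ⟪ϑ, F x⟫) 0) ^ (1 / lam - 1) * (1 + lam * ⟪w, F x⟫)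
      = (max (1 + lam * ⟪ϑ, F x⟫) 0) ^ (1 / lam)
        + lam * ((max (1 + lam * ⟪ϑ, F x⟫) 0) ^ (1 / lam - 1) * ⟪w - ϑ, F x⟫) := by
    intro x
    have hw : ⟪w, F x⟫ = ⟪ϑ, F x⟫ + ⟪w - ϑ, F x⟫ := by
      rw [inner_sub_left]; ring
    have hkey : (max (1 + lam * ⟪ϑ, F x⟫) 0) ^ (1 / lam - 1) * (1 + lam * ⟪ϑ, F x⟫)
        = (max (1 + lam * ⟪ϑ, F x⟫) 0) ^ (1 / lam) := by
      rcases lt_or_ge 0 (1 + lam * ⟪ϑ, F x⟫) with h | h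
      · rw [max_eq_left h.le]
        calc (1 + lam * ⟪ϑ, F x⟫) ^ (1 / lam - 1) * (1 + lam * ⟪ϑ, F x⟫)
            = (1 + lam * ⟪ϑ, F x⟫) ^ (1 / lam - 1 + 1) := by
              rw [Real.rpow_add h, Real.rpow_one]
          _ = (1 + lam * ⟪ϑ, F x⟫) ^ (1 / lam) := by norm_num
      · have h11 : 1 / lam - 1 ≠ 0 := by
          intro hc
          rw [sub_eq_zero] at hc
          have : lam = 1 := by field_simp at hc; linarith
          exact hlam1.ne this
        rw [max_eq_right h, Real.zero_rpow h11,
          Real.zero_rpow (one_div_ne_zero hlam0), zero_mul]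
    rw [hw]
    calc (max (1 + lam * ⟪ϑ, F x⟫) 0) ^ (1 / lam - 1) * (1 + lam * (⟪ϑ, F x⟫ + ⟪w - ϑ, F x⟫))
        = (max (1 + lam * ⟪ϑ, F x⟫) 0) ^ (1 / lam - 1) * (1 + lam * ⟪ϑ, F x⟫)
          + lam * ((max (1 + lam * ⟪ϑ, F x⟫) 0) ^ (1 / lam - 1) * ⟪w - ϑ, F x⟫) := by ring
      _ = _ := by rw [hkey]
  have hint : Integrable (fun x => (max (1 + lam * ⟪ϑ, F x⟫) 0) ^ (1 / lam - 1) * (1 + lam * ⟪w, F x⟫)) ν := by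
    refine Integrable.congr (hB.2.1.add (hg2.const_mul lam)) (Filter.Eventually.of_forall fun x => (hptwise x).symm)
  refine ⟨hint, ?_⟩
  have h2 : ∫ x, (max (1 + lam * ⟪ϑ, F x⟫) 0) ^ (1 / lam - 1) * ⟪w - ϑ, F x⟫ ∂ν
      = Real.exp φϑ * ⟪gφϑ, w - ϑ⟫ := by
    have : ∫ x, ⟪w - ϑ, ((max (1 + lam * ⟪ϑ, F x⟫) 0) ^ (1 / lam - 1)) • F x⟫ ∂ν
        = ⟪w - ϑ, ∫ x, ((max (1 + lam * ⟪ϑ, F x⟫) 0) ^ (1 / lam - 1)) • F x ∂ν⟫ :=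
      integral_inner hIntϑ _
    rw [← hDUIϑ, real_inner_smul_right, real_inner_comm] at this
    rw [← this]
    congr 1
    funext x
    rw [real_inner_smul_right]
  calc ∫ x, (max (1 + lam * ⟪ϑ, F x⟫) 0) ^ (1 / lam - 1) * (1 + lam * ⟪w, F x⟫) ∂ν
      = ∫ x, ((max (1 + lam * ⟪ϑ, F x⟫) 0) ^ (1 / lam)
        + lam * ((max (1 + lam * ⟪ϑ, F x⟫) 0) ^ (1 / lam - 1) * ⟪w - ϑ, F x⟫)) ∂ν := by
        exact integral_congr_ae (Filter.Eventually.of_forall hptwise)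
    _ = Real.exp φϑ + lam * (Real.exp φϑ * ⟪gφϑ, w - ϑ⟫) := by
        rw [integral_add hB.2.1 (hg2.const_mul lam), hB.2.2, integral_const_mul, h2]
    _ = _ := by ring

lemma alg1 (lam a b : ℝ) (h : 1 - lam * b ≠ 0) :
    1 + lam * (a - b) = (1 - lam * b) * (1 + lam * ((1 - lam * b)⁻¹ * a)) := by
  field_simp
  ring

end Helpers

/-- For a λ-exponential family (`λ < 1`, `λ ≠ 0`, `q = 1 − λ`) under the
stated regularity conditions (nonempty open convex `Ω`, smooth divisive potential `φ_λ` with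
differentiation under the integral sign, `1 − λ∇φ_λ·ϑ > 0`, strictly positive definite Hessian
of `(1/λ)(e^{λφ_λ} − 1)`, support condition): (a) the λ-logarithmic divergence of `φ_λ` is the
Rényi divergence of order `q` with swapped arguments, and (b) the `c_λ`-conjugate at
`η = ∇^{c_λ}φ_λ(ϑ)` equals the negative Rényi entropy of order `q` of `p(·;ϑ)`. -/
theorem lambdaExp_Renyi_duality {d : ℕ} {X : Type*} [MeasurableSpace X] (ν : Measure X)
    (lam q : ℝ) (hlam0 : lam ≠ 0) (hlam1 : lam < 1) (hq : q = 1 - lam)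
    (F : X → EuclideanSpace ℝ (Fin d)) (hF : Measurable F)
    (Ω : Set (EuclideanSpace ℝ (Fin d)))
    (hne : Ω.Nonempty) (hop : IsOpen Ω) (hconv : Convex ℝ Ω)
    (φ : EuclideanSpace ℝ (Fin d) → ℝ)
    (p : EuclideanSpace ℝ (Fin d) → X → ℝ)
    (hp : ∀ ϑ x, p ϑ x = (max (1 + lam * ⟪ϑ, F x⟫) 0) ^ (1 / lam) * Real.exp (-φ ϑ))
    (hnorm : ∀ ϑ ∈ Ω, ∫ x, p ϑ x ∂ν = 1)
    (hZ : ∀ ϑ ∈ Ω,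
      ∫⁻ x, (if 0 < 1 + lam * ⟪ϑ, F x⟫ then
          ENNReal.ofReal ((1 + lam * ⟪ϑ, F x⟫) ^ (1 / lam))
        else if 0 < lam then 0 else ⊤) ∂ν = ENNReal.ofReal (Real.exp (φ ϑ)))
    (hsmooth : ContDiffOn ℝ (⊤ : ℕ∞) φ Ω)
    (hdiff : ∀ ϑ ∈ Ω, DifferentiableAt ℝ φ ϑ)
    (hInt : ∀ ϑ ∈ Ω,
      Integrable (fun x => ((max (1 + lam * ⟪ϑ, F x⟫) 0) ^ (1 / lam - 1)) • F x) ν)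
    (hDUI : ∀ ϑ ∈ Ω, Real.exp (φ ϑ) • gradient φ ϑ
      = ∫ x, ((max (1 + lam * ⟪ϑ, F x⟫) 0) ^ (1 / lam - 1)) • F x ∂ν)
    (hpos : ∀ ϑ ∈ Ω, 0 < 1 - lam * ⟪gradient φ ϑ, ϑ⟫)
    (hhess : ∀ ϑ ∈ Ω, ∀ w : EuclideanSpace ℝ (Fin d), w ≠ 0 →
      0 < ⟪fderiv ℝ (gradient fun z => (1 / lam) * (Real.exp (lam * φ z) - 1)) ϑ w, w⟫)
    (X₀ : Set X) (hsupp : ∀ ϑ ∈ Ω, {x | 0 < p ϑ x} =ᵐ[ν] X₀) :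
    (∀ ϑ ∈ Ω, ∀ ϑ' ∈ Ω,
      φ ϑ - φ ϑ' - (1 / lam) * Real.log (1 + lam * ⟪gradient φ ϑ', ϑ - ϑ'⟫)
        = (1 / (q - 1)) * Real.log (∫ x, p ϑ' x ^ q * p ϑ x ^ (1 - q) ∂ν)) ∧
    (∀ ϑ ∈ Ω, lamConj lam Ω φ (lamGrad lam φ ϑ)
        = (((-(1 / (1 - q)) * Real.log (∫ x, p ϑ x ^ q ∂ν)) : ℝ) : EReal)) := by
  have h11 : 1 / lam - 1 ≠ 0 := by
    intro hc
    rw [sub_eq_zero] at hc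
    have : lam = 1 := by field_simp at hc; linarith
    exact hlam1.ne this
  have hpnn : ∀ θ x, 0 ≤ p θ x := fun θ x => by
    rw [hp]
    exact mul_nonneg (Real.rpow_nonneg (le_max_right _ _) _) (Real.exp_pos _).le
  have hppos_iff : ∀ θ x, (0 < p θ x ↔ 0 < 1 + lam * ⟪θ, F x⟫) := by
    intro θ x
    rw [hp]
    constructor
    · intro h
      by_contra hc
      rw [max_eq_right (not_lt.1 hc), Real.zero_rpow (one_div_ne_zero hlam0), zero_mul] at h
      exact lt_irrefl _ h
    · intro h
      rw [max_eq_left h.le]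
      exact mul_pos (Real.rpow_pos_of_pos h _) (Real.exp_pos _)
  have hpfun : ∀ θ, p θ = fun x => (max (1 + lam * ⟪θ, F x⟫) 0) ^ (1 / lam) * Real.exp (-φ θ) :=
    fun θ => funext (hp θ)
  have hpmeas : ∀ θ, Measurable (p θ) := fun θ => by
    rw [hpfun θ]
    exact ((measM hF lam θ).pow measurable_const).mul_const _
  have hIntp : ∀ θ ∈ Ω, Integrable (p θ) ν := by
    intro θ hθ
    by_contra h
    have h1 := hnorm θ hθ
    rw [integral_undef h] at h1
    exact one_ne_zero h1.symm
  have hsupp' : ∀ θ ∈ Ω, ∀ θ' ∈ Ω, {x | 0 < p θ x} =ᵐ[ν] {x | 0 < p θ' x} :=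
    fun θ hθ θ' hθ' => (hsupp θ hθ).trans (hsupp θ' hθ').symm
  have hνpos : ∀ θ ∈ Ω, 0 < ν {x | 0 < p θ x} := by
    intro θ hθ
    rcases (show (0:ℝ≥0∞) ≤ ν {x | 0 < p θ x} from zero_le).lt_or_eq with h | h
    · exact h
    · exfalso
      have hz : p θ =ᵐ[ν] 0 := by
        rw [Filter.EventuallyEq, MeasureTheory.ae_iff]
        refine measure_mono_null (fun x hx => ?_) h.symm
        simp only [Set.mem_setOf_eq] at hx ⊢
        exact lt_of_le_of_ne (hpnn θ x) (Ne.symm hx)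
      have : ∫ x, p θ x ∂ν = 0 := by
        rw [integral_congr_ae hz]; simp
      rw [hnorm θ hθ] at this
      exact one_ne_zero this
  -- product formula
  have hprod : ∀ θ' θ x, p θ' x ^ q * p θ x ^ (1 - q)
      = Real.exp (-(1 - lam) * φ θ' - lam * φ θ)
        * ((max (1 + lam * ⟪θ', F x⟫) 0) ^ (1 / lam - 1) * (max (1 + lam * ⟪θ, F x⟫) 0)) := by
    intro θ' θ x
    have e1 : (1 / lam) * (1 - lam) = 1 / lam - 1 := by field_simp
    have e2 : (1 / lam) * lam = 1 := one_div_mul_cancel hlam0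
    rw [hp, hp, hq]
    rw [Real.mul_rpow (Real.rpow_nonneg (le_max_right _ _) _) (Real.exp_pos _).le,
      Real.mul_rpow (Real.rpow_nonneg (le_max_right _ _) _) (Real.exp_pos _).le,
      ← Real.rpow_mul (le_max_right _ _), ← Real.rpow_mul (le_max_right _ _),
      ← Real.exp_mul, ← Real.exp_mul]
    rw [show (1 : ℝ) - (1 - lam) = lam by ring, e1, e2, Real.rpow_one]
    rw [show -(1 - lam) * φ θ' - lam * φ θ = -φ θ' * (1 - lam) + -φ θ * lam by ring,
      Real.exp_add]
    ring
  -- a.e. replacement of the max by the linear form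
  have haeP : ∀ θ' ∈ Ω, ∀ θ ∈ Ω, (fun x => p θ' x ^ q * p θ x ^ (1 - q)) =ᵐ[ν]
      (fun x => Real.exp (-(1 - lam) * φ θ' - lam * φ θ)
        * ((max (1 + lam * ⟪θ', F x⟫) 0) ^ (1 / lam - 1) * (1 + lam * ⟪θ, F x⟫))) := by
    intro θ' hθ' θ hθ
    have hset := Filter.eventuallyEq_set.mp (hsupp' θ' hθ' θ hθ)
    filter_upwards [hset] with x hx
    rw [hprod θ' θ x]
    by_cases h' : 0 < 1 + lam * ⟪θ', F x⟫
    · have hθx : 0 < 1 + lam * ⟪θ, F x⟫ := by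
        rw [← hppos_iff]
        exact hx.mp ((hppos_iff θ' x).mpr h')
      rw [max_eq_left hθx.le]
    · rw [max_eq_right (not_lt.1 h'), Real.zero_rpow h11, zero_mul, zero_mul]
  -- the main integral identity
  have hmain : ∀ θ' ∈ Ω, ∀ θ ∈ Ω,
      Integrable (fun x => p θ' x ^ q * p θ x ^ (1 - q)) ν ∧
      (∫ x, p θ' x ^ q * p θ x ^ (1 - q) ∂ν
        = Real.exp (lam * (φ θ' - φ θ)) * (1 + lam * ⟪gradient φ θ', θ - θ'⟫)) ∧
      0 < ∫ x, p θ' x ^ q * p θ x ^ (1 - q) ∂ν := by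
    intro θ' hθ' θ hθ
    obtain ⟨hcint, hcval⟩ := core hlam0 hlam1 hF (φ θ') (gradient φ θ') θ'
      (hZ θ' hθ') (hInt θ' hθ') (hDUI θ' hθ') θ
    have hae := haeP θ' hθ' θ hθ
    have hint1 : Integrable (fun x => p θ' x ^ q * p θ x ^ (1 - q)) ν :=
      ((hcint.const_mul (Real.exp (-(1 - lam) * φ θ' - lam * φ θ))).congr hae.symm)
    have hval : ∫ x, p θ' x ^ q * p θ x ^ (1 - q) ∂ν
        = Real.exp (lam * (φ θ' - φ θ)) * (1 + lam * ⟪gradient φ θ', θ - θ'⟫) := by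
      rw [integral_congr_ae hae, integral_const_mul, hcval, ← mul_assoc, ← Real.exp_add,
        show -(1 - lam) * φ θ' - lam * φ θ + φ θ' = lam * (φ θ' - φ θ) by ring]
    refine ⟨hint1, hval, ?_⟩
    rw [integral_pos_iff_support_of_nonneg_ae (Filter.Eventually.of_forall fun x =>
      mul_nonneg (Real.rpow_nonneg (hpnn θ' x) _) (Real.rpow_nonneg (hpnn θ x) _)) hint1]
    have hsub : {x | 0 < p θ' x} ∩ {x | 0 < p θ x} ⊆
        Function.support fun x => p θ' x ^ q * p θ x ^ (1 - q) := by
      intro x hx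
      exact (mul_pos (Real.rpow_pos_of_pos hx.1 _) (Real.rpow_pos_of_pos hx.2 _)).ne'
    have hmeq : ν ({x | 0 < p θ' x} ∩ {x | 0 < p θ x}) = ν {x | 0 < p θ' x} := by
      have : ({x | 0 < p θ' x} ∩ {x | 0 < p θ x} : Set X)
          =ᵐ[ν] ({x | 0 < p θ' x} ∩ {x | 0 < p θ' x} : Set X) :=
        Filter.EventuallyEq.inter (Filter.EventuallyEq.refl _ _) (hsupp' θ hθ θ' hθ')
      rw [measure_congr this, Set.inter_self]
    calc (0 : ℝ≥0∞) < ν {x | 0 < p θ' x} := hνpos θ' hθ'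
      _ = ν ({x | 0 < p θ' x} ∩ {x | 0 < p θ x}) := hmeq.symm
      _ ≤ ν (Function.support fun x => p θ' x ^ q * p θ x ^ (1 - q)) := measure_mono hsub
  constructor
  · -- part (a)
    intro ϑ hϑ ϑ' hϑ'
    obtain ⟨hint, hval, hpos'⟩ := hmain ϑ' hϑ' ϑ hϑ
    have h1D : 0 < 1 + lam * ⟪gradient φ ϑ', ϑ - ϑ'⟫ := by
      rw [hval] at hpos'
      nlinarith [Real.exp_pos (lam * (φ ϑ' - φ ϑ))]
    rw [hval, Real.log_mul (Real.exp_ne_zero _) h1D.ne', Real.log_exp]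
    have h1 : (1 : ℝ) / (q - 1) = -(1 / lam) := by rw [hq]; field_simp; rw [show (1:ℝ) - lam - 1 = -lam by ring, div_neg, div_self hlam0]
    rw [h1]
    field_simp
    ring
  · -- part (b)
    intro ϑ hϑ
    have hs := hpos ϑ hϑ
    have hkey : ∀ u : EuclideanSpace ℝ (Fin d), 1 + lam * ⟪gradient φ ϑ, u - ϑ⟫
        = (1 - lam * ⟪gradient φ ϑ, ϑ⟫) * (1 + lam * ⟪u, lamGrad lam φ ϑ⟫) := by
      intro u
      have h1 : ⟪u, lamGrad lam φ ϑ⟫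
          = (1 - lam * ⟪gradient φ ϑ, ϑ⟫)⁻¹ * ⟪gradient φ ϑ, u⟫ := by
        simp only [lamGrad, real_inner_smul_right]
        rw [real_inner_comm u (gradient φ ϑ)]
      rw [h1, inner_sub_right]
      exact alg1 lam _ _ hs.ne'
    have huA : ∀ u ∈ Ω, 0 < 1 + lam * ⟪u, lamGrad lam φ ϑ⟫ := by
      intro u hu
      obtain ⟨hint, hval, hpos'⟩ := hmain ϑ hϑ u hu
      rw [hval] at hpos'
      have h1D : 0 < 1 + lam * ⟪gradient φ ϑ, u - ϑ⟫ := by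
        nlinarith [Real.exp_pos (lam * (φ ϑ - φ u))]
      rw [hkey u] at h1D
      by_contra hc
      push_neg at hc
      nlinarith
    have hpq : ∀ x, p ϑ x ^ q
        = Real.exp (-(1 - lam) * φ ϑ) * (max (1 + lam * ⟪ϑ, F x⟫) 0) ^ (1 / lam - 1) := by
      intro x
      have e1 : (1 / lam) * (1 - lam) = 1 / lam - 1 := by field_simp
      rw [hp, hq, Real.mul_rpow (Real.rpow_nonneg (le_max_right _ _) _) (Real.exp_pos _).le,
        ← Real.rpow_mul (le_max_right _ _), ← Real.exp_mul, e1,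
        show -φ ϑ * (1 - lam) = -(1 - lam) * φ ϑ by ring]
      ring
    obtain ⟨hintm, hvalm⟩ := core hlam0 hlam1 hF (φ ϑ) (gradient φ ϑ) ϑ
      (hZ ϑ hϑ) (hInt ϑ hϑ) (hDUI ϑ hϑ) 0
    simp only [inner_zero_left, mul_zero, add_zero, mul_one, zero_sub, inner_neg_right] at hvalm hintm
    have hIq : ∫ x, p ϑ x ^ q ∂ν
        = Real.exp (lam * φ ϑ) * (1 - lam * ⟪gradient φ ϑ, ϑ⟫) := by
      calc ∫ x, p ϑ x ^ q ∂ν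
          = ∫ x, Real.exp (-(1 - lam) * φ ϑ)
              * (max (1 + lam * ⟪ϑ, F x⟫) 0) ^ (1 / lam - 1) ∂ν :=
            integral_congr_ae (Filter.Eventually.of_forall fun x => hpq x)
        _ = Real.exp (-(1 - lam) * φ ϑ)
              * ∫ x, (max (1 + lam * ⟪ϑ, F x⟫) 0) ^ (1 / lam - 1) ∂ν := integral_const_mul _ _
        _ = Real.exp (-(1 - lam) * φ ϑ)
              * (Real.exp (φ ϑ) * (1 + lam * -⟪gradient φ ϑ, ϑ⟫)) := by rw [hvalm]
        _ = Real.exp (lam * φ ϑ) * (1 - lam * ⟪gradient φ ϑ, ϑ⟫) := by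
            rw [← mul_assoc, ← Real.exp_add,
              show -(1 - lam) * φ ϑ + φ ϑ = lam * φ ϑ by ring]
            ring
    have hVeq : -(1 / (1 - q)) * Real.log (∫ x, p ϑ x ^ q ∂ν)
        = -φ ϑ - (1 / lam) * Real.log (1 - lam * ⟪gradient φ ϑ, ϑ⟫) := by
      rw [hIq, hq, Real.log_mul (Real.exp_ne_zero _) hs.ne', Real.log_exp,
        show (1:ℝ) - (1 - lam) = lam by ring]
      field_simp
      ring
    have hineq : ∀ u ∈ Ω, (1 / lam) * Real.log (1 + lam * ⟪u, lamGrad lam φ ϑ⟫) - φ u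
        ≤ -φ ϑ - (1 / lam) * Real.log (1 - lam * ⟪gradient φ ϑ, ϑ⟫) := by
      intro u hu
      obtain ⟨hint, hval, hpos'⟩ := hmain ϑ hϑ u hu
      have hA := huA u hu
      have hlogI : Real.log (∫ x, p ϑ x ^ q * p u x ^ (1 - q) ∂ν)
          = lam * (φ ϑ - φ u) + (Real.log (1 - lam * ⟪gradient φ ϑ, ϑ⟫)
            + Real.log (1 + lam * ⟪u, lamGrad lam φ ϑ⟫)) := by
        rw [hval, hkey u, Real.log_mul (Real.exp_ne_zero _) (mul_pos hs hA).ne',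
          Real.log_exp, Real.log_mul hs.ne' hA.ne']
      have hInt2 : Integrable (fun x => q * p ϑ x + (1 - q) * p u x) ν :=
        ((hIntp ϑ hϑ).const_mul q).add ((hIntp u hu).const_mul (1 - q))
      have hmix : ∫ x, (q * p ϑ x + (1 - q) * p u x) ∂ν = 1 := by
        rw [integral_add ((hIntp ϑ hϑ).const_mul q) ((hIntp u hu).const_mul (1 - q)),
          integral_const_mul, integral_const_mul, hnorm ϑ hϑ, hnorm u hu]
        ring
      have hfrac : (1 / lam) * Real.log (∫ x, p ϑ x ^ q * p u x ^ (1 - q) ∂ν) ≤ 0 := by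
        rcases lt_or_gt_of_ne hlam0 with hneg | hposl
        · have haepos := (stepB hlam0 hF u (φ u) (hZ u hu)).1 hneg
          have hgeo : ∀ᵐ x ∂ν, q * p ϑ x + (1 - q) * p u x
              ≤ p ϑ x ^ q * p u x ^ (1 - q) := by
            filter_upwards [haepos] with x hx
            have hb : 0 < p u x := (hppos_iff u x).mpr hx
            have ht : (-1 : ℝ) ≤ p ϑ x / p u x - 1 := by
              have := div_nonneg (hpnn ϑ x) hb.le; linarith
            have hq1 : 1 ≤ q := by rw [hq]; linarith
            have hber := one_add_mul_self_le_rpow_one_add ht hq1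
            rw [show 1 + (p ϑ x / p u x - 1) = p ϑ x / p u x by ring] at hber
            have h2 := mul_le_mul_of_nonneg_left hber hb.le
            have hrw : p u x * ((p ϑ x / p u x) ^ q) = p ϑ x ^ q * p u x ^ (1 - q) := by
              rw [Real.div_rpow (hpnn ϑ x) hb.le, Real.rpow_sub hb, Real.rpow_one]
              field_simp
            have hlw : p u x * (1 + q * (p ϑ x / p u x - 1))
                = q * p ϑ x + (1 - q) * p u x := by
              field_simp
              ring
            rw [hlw, hrw] at h2
            exact h2
          have hge1 : 1 ≤ ∫ x, p ϑ x ^ q * p u x ^ (1 - q) ∂ν := by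
            have h3 := integral_mono_ae hInt2 hint hgeo
            rw [hmix] at h3
            exact h3
          exact mul_nonpos_of_nonpos_of_nonneg (le_of_lt (one_div_neg.mpr hneg))
            (Real.log_nonneg hge1)
        · have hle : ∀ x, p ϑ x ^ q * p u x ^ (1 - q) ≤ q * p ϑ x + (1 - q) * p u x := fun x =>
            Real.geom_mean_le_arith_mean2_weighted (by rw [hq]; linarith) (by rw [hq]; linarith)
              (hpnn ϑ x) (hpnn u x) (by ring)
          have hle1 : ∫ x, p ϑ x ^ q * p u x ^ (1 - q) ∂ν ≤ 1 := by
            have h3 := integral_mono hint hInt2 hle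
            rw [hmix] at h3
            exact h3
          exact mul_nonpos_of_nonneg_of_nonpos (le_of_lt (one_div_pos.mpr hposl))
            (Real.log_nonpos hpos'.le hle1)
      have hc1 : (1 / lam) * (lam * (φ ϑ - φ u)) = φ ϑ - φ u := by field_simp
      have hsplit : (1 / lam) * Real.log (∫ x, p ϑ x ^ q * p u x ^ (1 - q) ∂ν)
          = (1 / lam) * (lam * (φ ϑ - φ u))
            + ((1 / lam) * Real.log (1 - lam * ⟪gradient φ ϑ, ϑ⟫)
              + (1 / lam) * Real.log (1 + lam * ⟪u, lamGrad lam φ ϑ⟫)) := by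
        rw [hlogI]; ring
      rw [hsplit, hc1] at hfrac
      linarith
    have hϑA : 1 + lam * ⟪ϑ, lamGrad lam φ ϑ⟫ = (1 - lam * ⟪gradient φ ϑ, ϑ⟫)⁻¹ := by
      have h := hkey ϑ
      simp only [sub_self, inner_zero_right, mul_zero, add_zero] at h
      exact eq_inv_of_mul_eq_one_right h.symm
    rw [hVeq]
    apply le_antisymm
    · simp only [lamConj]
      refine iSup₂_le fun u hu => ?_
      have hnc : negCost lam u (lamGrad lam φ ϑ)
          = (((1 / lam) * Real.log (1 + lam * ⟪u, lamGrad lam φ ϑ⟫) : ℝ) : EReal) := by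
        unfold negCost
        rw [if_pos (huA u hu)]
      rw [hnc, ← EReal.coe_sub]
      exact_mod_cast hineq u hu
    · have hnc : negCost lam ϑ (lamGrad lam φ ϑ)
          = ((((1 / lam) * Real.log ((1 - lam * ⟪gradient φ ϑ, ϑ⟫)⁻¹)) : ℝ) : EReal) := by
        unfold negCost
        rw [hϑA, if_pos (inv_pos.mpr hs)]
      have hterm : negCost lam ϑ (lamGrad lam φ ϑ) - ((φ ϑ : ℝ) : EReal)
          = (((-φ ϑ - (1 / lam) * Real.log (1 - lam * ⟪gradient φ ϑ, ϑ⟫)) : ℝ) : EReal) := by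
        rw [hnc, ← EReal.coe_sub]
        norm_cast
        rw [Real.log_inv]
        ring
      calc (((-φ ϑ - (1 / lam) * Real.log (1 - lam * ⟪gradient φ ϑ, ϑ⟫)) : ℝ) : EReal)
          = negCost lam ϑ (lamGrad lam φ ϑ) - ((φ ϑ : ℝ) : EReal) := hterm.symm
        _ ≤ lamConj lam Ω φ (lamGrad lam φ ϑ) :=
            le_iSup₂ (f := fun u (_ : u ∈ Ω) =>
              negCost lam u (lamGrad lam φ ϑ) - ((φ u : ℝ) : EReal)) ϑ hϑ
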